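/- Let g > 0, β > 0 and λ ∈ ℝ. The one-particle BC Toda eigenfunction Ψ_λ(x) = (2β)^{iλ}/Γ(g - iλ) · ∫_{ln β}^∞ exp(iλ(x - 2y) - e^{y-x}) (1 + βe^{-y})^{-iλ - g} (1 - βe^{-y})^{-iλ + g - 1} dy satisfies the pointwise bound |Ψ_λ(x)| ≤ P(|x|)/|Γ(g - iλ)| · exp(-βe^{-x}·θ(ln β - x)) for all x ∈ ℝ, where P is a polynomial (depending on β, g but not on λ) and θ is the Heaviside step function. -/

import Mathlib

open MeasureTheory Real Set

noncomputable def theta (t : ℝ) : ℝ := if 0 ≤ t then 1 else 0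

/-- The one-particle BC Toda eigenfunction
`Ψ_λ(x) = (2β)^{iλ}/Γ(g - iλ) · ∫_{ln β}^∞ e^{iλ(x-2y) - e^{y-x}}
(1+βe^{-y})^{-iλ-g} (1-βe^{-y})^{-iλ+g-1} dy`. -/
noncomputable def PsiOne (g β lam x : ℝ) : ℂ :=
  ((2 * β : ℝ) : ℂ) ^ (Complex.I * (lam : ℂ)) / Complex.Gamma ((g : ℂ) - Complex.I * lam) *
    ∫ y in Set.Ioi (Real.log β),
      Complex.exp (Complex.I * (lam : ℂ) * ((x - 2 * y : ℝ) : ℂ)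
          - Complex.exp ((y - x : ℝ) : ℂ)) *
        ((1 + β * Real.exp (-y) : ℝ) : ℂ) ^ (-Complex.I * (lam : ℂ) - (g : ℂ)) *
        ((1 - β * Real.exp (-y) : ℝ) : ℂ) ^ (-Complex.I * (lam : ℂ) + (g : ℂ) - 1)

lemma aux_e_mul_le (s : ℝ) : Real.exp 1 * s ≤ Real.exp s := by
  have h : Real.exp s = Real.exp 1 * Real.exp (s - 1) := by
    rw [← Real.exp_add]; ring_nf
  nlinarith [Real.add_one_le_exp (s - 1), Real.exp_pos 1]

lemma aux_one_sub {z : ℝ} (h0 : 0 ≤ z) (h1 : z ≤ 1) :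
    z * Real.exp (-1) ≤ 1 - Real.exp (-z) := by
  have h2 : Real.exp (-1) ≤ Real.exp (-z) := Real.exp_le_exp.mpr (by linarith)
  have h3 : z + 1 ≤ Real.exp z := Real.add_one_le_exp z
  have h5 : 0 < Real.exp z := Real.exp_pos z
  have h6 : z * Real.exp (-z) ≤ 1 - Real.exp (-z) := by
    rw [Real.exp_neg]
    have hc : (Real.exp z) * (Real.exp z)⁻¹ = 1 := mul_inv_cancel₀ (ne_of_gt h5)
    nlinarith [inv_pos.mpr h5]
  nlinarith [mul_le_mul_of_nonneg_left h2 h0]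

lemma aux_norm (g β lam x y : ℝ) (h1 : 0 < 1 + β * Real.exp (-y))
    (h2 : 0 < 1 - β * Real.exp (-y)) :
    ‖Complex.exp (Complex.I * (lam : ℂ) * ((x - 2 * y : ℝ) : ℂ)
          - Complex.exp ((y - x : ℝ) : ℂ)) *
        ((1 + β * Real.exp (-y) : ℝ) : ℂ) ^ (-Complex.I * (lam : ℂ) - (g : ℂ)) *
        ((1 - β * Real.exp (-y) : ℝ) : ℂ) ^ (-Complex.I * (lam : ℂ) + (g : ℂ) - 1)‖
      = Real.exp (-Real.exp (y - x)) * (1 + β * Real.exp (-y)) ^ (-g)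
          * (1 - β * Real.exp (-y)) ^ (g - 1) := by
  rw [norm_mul, norm_mul,
    Complex.norm_exp, Complex.norm_cpow_eq_rpow_re_of_pos h1,
    Complex.norm_cpow_eq_rpow_re_of_pos h2]
  congr 3 <;>
    simp [Complex.sub_re, Complex.add_re, Complex.mul_re, ← Complex.ofReal_sub,
      Complex.exp_ofReal_re]

set_option maxHeartbeats 2000000 in
lemma aux_main (g β : ℝ) (hg : 0 < g) (hβ : 0 < β) :
    ∃ A B : ℝ, 0 ≤ A ∧ 0 ≤ B ∧ ∀ lam x : ℝ,
      (∫ y in Set.Ioi (Real.log β),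
        ‖Complex.exp (Complex.I * (lam : ℂ) * ((x - 2 * y : ℝ) : ℂ)
            - Complex.exp ((y - x : ℝ) : ℂ)) *
          ((1 + β * Real.exp (-y) : ℝ) : ℂ) ^ (-Complex.I * (lam : ℂ) - (g : ℂ)) *
          ((1 - β * Real.exp (-y) : ℝ) : ℂ) ^ (-Complex.I * (lam : ℂ) + (g : ℂ) - 1)‖)
        ≤ (A + B * |x|) * Real.exp (-(β * Real.exp (-x))) := by
  set a := Real.log β with ha
  have hexp1 : (0:ℝ) < 1 - Real.exp (-1) := by
    have : Real.exp (-1) < 1 := Real.exp_lt_one_iff.mpr (by norm_num)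
    linarith
  set C2 : ℝ := (1 - Real.exp (-1)) ^ (g - 1) + 1 with hC2
  set C1 : ℝ := Real.exp (1 - g) / g + 1 with hC1
  have hC2p : (0:ℝ) ≤ (1 - Real.exp (-1)) ^ (g - 1) := Real.rpow_nonneg hexp1.le _
  have hC2ge1 : 1 ≤ C2 := by rw [hC2]; linarith
  have hC2nn : 0 ≤ C2 := by linarith
  have hC1nn : 0 ≤ C1 := by rw [hC1]; positivity
  refine ⟨C1 + C2 * (2 * |a| + 1), C2, by positivity, hC2nn, fun lam x => ?_⟩
  set m := max a x with hm
  have ham : a ≤ m := le_max_left _ _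
  have hxm : x ≤ m := le_max_right _ _
  set M := Real.exp (-(β * Real.exp (-x))) with hM
  have hMnn : 0 ≤ M := (Real.exp_pos _).le
  have hbax : β * Real.exp (-x) = Real.exp (a - x) := by
    rw [Real.exp_sub, ha, Real.exp_log hβ, Real.exp_neg, div_eq_mul_inv]
  set f1 : ℝ → ℝ := fun y => Real.exp (1 - g) * (y - a) ^ (g - 1) + 1 with hf1
  set f3 : ℝ → ℝ := fun y => C2 * Real.exp m * Real.exp (-y) with hf3
  set G : ℝ → ℝ := fun y => M * ((Set.Ioc a (a + 1)).indicator f1 y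
      + (Set.Ioc (a + 1) (m + 1)).indicator (fun _ => C2) y
      + (Set.Ioi (m + 1)).indicator f3 y) with hG
  -- integrability of the pieces
  have hrpow : IntervalIntegrable (fun y : ℝ => (y - a) ^ (g - 1)) volume a (a + 1) := by
    have h0 : IntervalIntegrable (fun z : ℝ => z ^ (g - 1)) volume 0 1 :=
      intervalIntegral.intervalIntegrable_rpow' (by linarith)
    have := h0.comp_sub_right a
    simpa [add_comm] using this
  have hf1int : IntervalIntegrable f1 volume a (a + 1) :=
    ((hrpow.const_mul _).add intervalIntegrable_const)
  have hi1 : Integrable ((Set.Ioc a (a + 1)).indicator f1) := by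
    rw [integrable_indicator_iff measurableSet_Ioc]
    exact (intervalIntegrable_iff_integrableOn_Ioc_of_le (by linarith)).mp hf1int
  have hi2 : Integrable ((Set.Ioc (a + 1) (m + 1)).indicator (fun _ => C2)) := by
    rw [integrable_indicator_iff measurableSet_Ioc]
    exact integrableOn_const measure_Ioc_lt_top.ne
  have hi3 : Integrable ((Set.Ioi (m + 1)).indicator f3) := by
    rw [integrable_indicator_iff measurableSet_Ioi]
    have := (exp_neg_integrableOn_Ioi (m + 1) (by norm_num : (0:ℝ) < 1)).const_mul
      (C2 * Real.exp m)
    simp [neg_one_mul] at this; exact this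
  have hGint : Integrable G := (((hi1.add hi2).add hi3).const_mul M)
  -- pointwise bound
  have hle : ∀ᵐ y ∂(volume.restrict (Set.Ioi a)),
      ‖Complex.exp (Complex.I * (lam : ℂ) * ((x - 2 * y : ℝ) : ℂ)
            - Complex.exp ((y - x : ℝ) : ℂ)) *
          ((1 + β * Real.exp (-y) : ℝ) : ℂ) ^ (-Complex.I * (lam : ℂ) - (g : ℂ)) *
          ((1 - β * Real.exp (-y) : ℝ) : ℂ) ^ (-Complex.I * (lam : ℂ) + (g : ℂ) - 1)‖
        ≤ G y := by
    rw [ae_restrict_iff' measurableSet_Ioi]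
    filter_upwards with y hy
    have hya : a < y := hy
    have hbe : β * Real.exp (-y) = Real.exp (a - y) := by
      rw [Real.exp_sub, ha, Real.exp_log hβ, Real.exp_neg, div_eq_mul_inv]
    have h2 : 0 < 1 - β * Real.exp (-y) := by
      rw [hbe]
      have : Real.exp (a - y) < 1 := Real.exp_lt_one_iff.mpr (by linarith)
      linarith
    have h1 : 0 < 1 + β * Real.exp (-y) := by positivity
    rw [aux_norm g β lam x y h1 h2]
    have hR1 : (1 + β * Real.exp (-y)) ^ (-g) ≤ 1 :=
      Real.rpow_le_one_of_one_le_of_nonpos (by nlinarith [mul_pos hβ (Real.exp_pos (-y))]) (by linarith)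
    have hR1nn : 0 ≤ (1 + β * Real.exp (-y)) ^ (-g) := Real.rpow_nonneg h1.le _
    have hR2nn : 0 ≤ (1 - β * Real.exp (-y)) ^ (g - 1) := Real.rpow_nonneg h2.le _
    have hE : Real.exp (-Real.exp (y - x)) ≤ M := by
      rw [hM]
      apply Real.exp_le_exp.mpr
      rw [hbax]
      simp only [neg_le_neg_iff]
      exact Real.exp_le_exp.mpr (by linarith)
    have hR2C2 : a + 1 ≤ y → (1 - β * Real.exp (-y)) ^ (g - 1) ≤ C2 := by
      intro hy1
      rcases le_or_gt 1 g with hg1 | hg1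
      · have := Real.rpow_le_one (z := g - 1) h2.le (by nlinarith [mul_pos hβ (Real.exp_pos (-y))]) (by linarith)
        linarith
      · have hle' : 1 - Real.exp (-1) ≤ 1 - β * Real.exp (-y) := by
          rw [hbe]
          have : Real.exp (a - y) ≤ Real.exp (-1) := Real.exp_le_exp.mpr (by linarith)
          linarith
        have := Real.rpow_le_rpow_of_nonpos hexp1 hle' (by linarith : g - 1 ≤ 0)
        linarith
    rcases le_or_gt y (a + 1) with hy1 | hy1
    · have hGy : G y = M * f1 y := by
        rw [hG]
        simp only
        rw [Set.indicator_of_mem (by exact ⟨hya, hy1⟩),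
          Set.indicator_of_notMem (by simp only [Set.mem_Ioc, not_and]; intro h; linarith),
          Set.indicator_of_notMem (by simp only [Set.mem_Ioi, not_lt]; linarith)]
        ring
      rw [hGy]
      have hR2 : (1 - β * Real.exp (-y)) ^ (g - 1) ≤ f1 y := by
        have hz0 : 0 < y - a := by linarith
        have hf1nn : 0 ≤ Real.exp (1 - g) * (y - a) ^ (g - 1) := by positivity
        rcases le_or_gt 1 g with hg1 | hg1
        · have := Real.rpow_le_one (z := g - 1) h2.le (by nlinarith [mul_pos hβ (Real.exp_pos (-y))]) (by linarith)
          rw [hf1]; dsimp only; linarith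
        · have key : (y - a) * Real.exp (-1) ≤ 1 - β * Real.exp (-y) := by
            rw [hbe]
            have := aux_one_sub (z := y - a) hz0.le (by linarith)
            rw [neg_sub] at this
            linarith
          have hstep := Real.rpow_le_rpow_of_nonpos (by positivity) key (by linarith : g - 1 ≤ 0)
          rw [Real.mul_rpow hz0.le (Real.exp_pos _).le] at hstep
          have he : (Real.exp (-1) : ℝ) ^ (g - 1) = Real.exp (1 - g) := by
            rw [← Real.exp_one_rpow (-1), ← Real.rpow_mul (Real.exp_pos 1).le,
              Real.exp_one_rpow]
            congr 1; ring
          rw [he] at hstep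
          rw [hf1]; dsimp only; nlinarith [Real.rpow_nonneg hz0.le (g-1)]
      calc Real.exp (-Real.exp (y - x)) * (1 + β * Real.exp (-y)) ^ (-g)
            * (1 - β * Real.exp (-y)) ^ (g - 1)
          ≤ M * 1 * f1 y := by
            apply mul_le_mul (mul_le_mul hE hR1 hR1nn hMnn) hR2 hR2nn
              (by rw [mul_one]; exact hMnn)
        _ = M * f1 y := by ring
    · rcases le_or_gt y (m + 1) with hy2 | hy2
      · have hGy : G y = M * C2 := by
          rw [hG]
          simp only
          rw [Set.indicator_of_notMem (by simp only [Set.mem_Ioc, not_and]; intro h; intro h2'; linarith),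
            Set.indicator_of_mem (by exact ⟨hy1, hy2⟩),
            Set.indicator_of_notMem (by simp only [Set.mem_Ioi, not_lt]; linarith)]
          ring
        rw [hGy]
        have hR2 := hR2C2 hy1.le
        calc Real.exp (-Real.exp (y - x)) * (1 + β * Real.exp (-y)) ^ (-g)
              * (1 - β * Real.exp (-y)) ^ (g - 1)
            ≤ M * 1 * C2 := by
              apply mul_le_mul (mul_le_mul hE hR1 hR1nn hMnn) hR2 hR2nn
                (by rw [mul_one]; exact hMnn)
          _ = M * C2 := by ring
      · have hGy : G y = M * f3 y := by
          rw [hG]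
          simp only
          rw [Set.indicator_of_notMem (by simp only [Set.mem_Ioc, not_and]; intro h; intro h2'; linarith),
            Set.indicator_of_notMem (by simp only [Set.mem_Ioc, not_and]; intro h; intro h2'; linarith),
            Set.indicator_of_mem (by exact hy2)]
          ring
        rw [hGy]
        have hR2 := hR2C2 (by linarith)
        have hE3 : Real.exp (-Real.exp (y - x)) ≤ M * Real.exp (m - y) := by
          have e1 : Real.exp (y - x) = Real.exp (y - m) * Real.exp (m - x) := by
            rw [← Real.exp_add]; ring_nf
          have e2 : Real.exp 1 * (y - m) ≤ Real.exp (y - m) := aux_e_mul_le _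
          have e3 : (1:ℝ) ≤ Real.exp (m - x) := Real.one_le_exp (by linarith)
          have e4 : Real.exp (a - x) ≤ Real.exp (m - x) := Real.exp_le_exp.mpr (by linarith)
          have e5 : (2:ℝ) ≤ Real.exp 1 := by nlinarith [Real.add_one_le_exp 1]
          have e6 : (1:ℝ) ≤ y - m := by linarith
          have claim : β * Real.exp (-x) + (y - m) ≤ Real.exp (y - x) := by
            rw [hbax, e1]
            have p0 : (0:ℝ) ≤ y - m := by linarith
            have p1 : (y - m) + 1 ≤ Real.exp (y - m) := by
              nlinarith [mul_le_mul_of_nonneg_right e5 p0]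
            have p2 : ((y - m) + 1) * Real.exp (m - x) ≤ Real.exp (y - m) * Real.exp (m - x) :=
              mul_le_mul_of_nonneg_right p1 (Real.exp_pos _).le
            have p3 : (y - m) * 1 ≤ (y - m) * Real.exp (m - x) :=
              mul_le_mul_of_nonneg_left e3 p0
            nlinarith [p2, p3, e4]
          calc Real.exp (-Real.exp (y - x)) ≤ Real.exp (-(β * Real.exp (-x) + (y - m))) :=
                Real.exp_le_exp.mpr (by linarith)
            _ = M * Real.exp (m - y) := by rw [hM, ← Real.exp_add]; ring_nf
        calc Real.exp (-Real.exp (y - x)) * (1 + β * Real.exp (-y)) ^ (-g)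
              * (1 - β * Real.exp (-y)) ^ (g - 1)
            ≤ (M * Real.exp (m - y)) * 1 * C2 := by
              apply mul_le_mul (mul_le_mul hE3 hR1 hR1nn
                (mul_nonneg hMnn (Real.exp_pos _).le)) hR2 hR2nn
                (by rw [mul_one]; exact mul_nonneg hMnn (Real.exp_pos _).le)
          _ = M * f3 y := by rw [hf3]; dsimp only; rw [show Real.exp (m - y) = Real.exp m * Real.exp (-y) by rw [← Real.exp_add]; ring_nf]; ring
  -- compare with the integral of G
  have step1 : (∫ y in Set.Ioi a,
      ‖Complex.exp (Complex.I * (lam : ℂ) * ((x - 2 * y : ℝ) : ℂ)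
            - Complex.exp ((y - x : ℝ) : ℂ)) *
          ((1 + β * Real.exp (-y) : ℝ) : ℂ) ^ (-Complex.I * (lam : ℂ) - (g : ℂ)) *
          ((1 - β * Real.exp (-y) : ℝ) : ℂ) ^ (-Complex.I * (lam : ℂ) + (g : ℂ) - 1)‖)
      ≤ ∫ y in Set.Ioi a, G y := by
    apply integral_mono_of_nonneg
    · filter_upwards with y using norm_nonneg _
    · exact hGint.restrict
    · exact hle
  -- compute the integral of G
  have hval1 : (∫ y in Set.Ioi a, (Set.Ioc a (a + 1)).indicator f1 y) = C1 := by
    rw [setIntegral_indicator measurableSet_Ioc,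
      Set.inter_eq_self_of_subset_right Set.Ioc_subset_Ioi_self,
      ← intervalIntegral.integral_of_le (by linarith : a ≤ a + 1)]
    rw [hf1]
    rw [intervalIntegral.integral_add (hrpow.const_mul _) intervalIntegrable_const]
    rw [intervalIntegral.integral_const_mul]
    have hsub : (∫ y in a..(a + 1), (y - a) ^ (g - 1)) = ∫ z in (0:ℝ)..1, z ^ (g - 1) := by
      have := intervalIntegral.integral_comp_sub_right (a := a) (b := a + 1)
        (fun z : ℝ => z ^ (g - 1)) a
      simpa using this
    rw [hsub, integral_rpow (Or.inl (by linarith))]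
    rw [show (∫ (_ : ℝ) in a..a + 1, (1:ℝ)) = ((a+1) - a) • (1:ℝ) from
        intervalIntegral.integral_const 1, Real.one_rpow,
      Real.zero_rpow (by linarith : g - 1 + 1 ≠ 0), hC1]
    have : g - 1 + 1 = g := by ring
    rw [this, smul_eq_mul]
    ring_nf
  have hval2 : (∫ y in Set.Ioi a, (Set.Ioc (a + 1) (m + 1)).indicator (fun _ => C2) y)
      = (m - a) * C2 := by
    rw [setIntegral_indicator measurableSet_Ioc,
      Set.inter_eq_self_of_subset_right
        (Set.Ioc_subset_Ioi_self.trans (Set.Ioi_subset_Ioi (by linarith))),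
      setIntegral_const, measureReal_def, Real.volume_Ioc, smul_eq_mul,
      ENNReal.toReal_ofReal (by linarith)]
    ring_nf
  have hval3 : (∫ y in Set.Ioi a, (Set.Ioi (m + 1)).indicator f3 y) = C2 * Real.exp (-1) := by
    rw [setIntegral_indicator measurableSet_Ioi,
      Set.inter_eq_self_of_subset_right (Set.Ioi_subset_Ioi (by linarith)),
      hf3]
    rw [MeasureTheory.integral_const_mul, integral_exp_neg_Ioi, mul_assoc, ← Real.exp_add]
    norm_num
  have hGval : (∫ y in Set.Ioi a, G y) = M * (C1 + (m - a) * C2 + C2 * Real.exp (-1)) := by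
    rw [hG]
    rw [MeasureTheory.integral_const_mul]
    have hi12 : Integrable (fun y => (Set.Ioc a (a + 1)).indicator f1 y
        + (Set.Ioc (a + 1) (m + 1)).indicator (fun _ => C2) y)
        (volume.restrict (Set.Ioi a)) := (hi1.restrict).add (hi2.restrict)
    rw [integral_add hi12 (hi3.restrict), integral_add (hi1.restrict) (hi2.restrict),
      hval1, hval2, hval3]
  rw [hGval] at step1
  have hma : m - a ≤ |x| + 2 * |a| := by
    have h1 : m ≤ |a| + |x| := by
      rw [hm]
      exact max_le (by nlinarith [le_abs_self a, abs_nonneg x]) (by nlinarith [le_abs_self x, abs_nonneg a])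
    have h2 : -a ≤ |a| := neg_le_abs a
    linarith
  have hexp_le : Real.exp (-1) ≤ 1 := Real.exp_le_one_iff.mpr (by norm_num)
  have inner : C1 + (m - a) * C2 + C2 * Real.exp (-1)
      ≤ C1 + C2 * (2 * |a| + 1) + C2 * |x| := by
    nlinarith [mul_le_mul_of_nonneg_right hma hC2nn]
  calc _ ≤ M * (C1 + (m - a) * C2 + C2 * Real.exp (-1)) := step1
    _ ≤ (C1 + C2 * (2 * |a| + 1) + C2 * |x|) * M := by
        nlinarith [mul_le_mul_of_nonneg_left inner hMnn]

theorem stmt17 (g β : ℝ) (hg : 0 < g) (hβ : 0 < β) :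
    ∃ P : Polynomial ℝ, ∀ lam x : ℝ,
      ‖PsiOne g β lam x‖ ≤
        Polynomial.eval |x| P / ‖Complex.Gamma ((g : ℂ) - Complex.I * lam)‖ *
          Real.exp (-(β * Real.exp (-x)) * theta (Real.log β - x)) := by
  obtain ⟨A, B, hA, hB, hbound⟩ := aux_main g β hg hβ
  refine ⟨Polynomial.C A + Polynomial.C B * Polynomial.X, fun lam x => ?_⟩
  have heval : Polynomial.eval |x| (Polynomial.C A + Polynomial.C B * Polynomial.X)
      = A + B * |x| := by simp
  rw [heval]
  have hABnn : 0 ≤ A + B * |x| := by positivity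
  simp only [PsiOne]
  rw [norm_mul, norm_div]
  have hnum : ‖((2 * β : ℝ) : ℂ) ^ (Complex.I * (lam : ℂ))‖ = 1 := by
    rw [Complex.norm_cpow_eq_rpow_re_of_pos (by positivity)]
    simp
  rw [hnum]
  set Γn := ‖Complex.Gamma ((g : ℂ) - Complex.I * lam)‖ with hΓ
  have hΓnn : 0 ≤ Γn := norm_nonneg _
  have h1 : ‖∫ y in Set.Ioi (Real.log β),
      Complex.exp (Complex.I * (lam : ℂ) * ((x - 2 * y : ℝ) : ℂ)
          - Complex.exp ((y - x : ℝ) : ℂ)) *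
        ((1 + β * Real.exp (-y) : ℝ) : ℂ) ^ (-Complex.I * (lam : ℂ) - (g : ℂ)) *
        ((1 - β * Real.exp (-y) : ℝ) : ℂ) ^ (-Complex.I * (lam : ℂ) + (g : ℂ) - 1)‖
      ≤ (A + B * |x|) * Real.exp (-(β * Real.exp (-x))) :=
    le_trans (norm_integral_le_integral_norm _) (hbound lam x)
  have hθ : Real.exp (-(β * Real.exp (-x))) ≤
      Real.exp (-(β * Real.exp (-x)) * theta (Real.log β - x)) := by
    apply Real.exp_le_exp.mpr
    unfold theta
    split
    · rw [mul_one]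
    · rw [mul_zero]
      nlinarith [mul_pos hβ (Real.exp_pos (-x))]
  calc 1 / Γn * ‖_‖ ≤ 1 / Γn * ((A + B * |x|) * Real.exp (-(β * Real.exp (-x)))) :=
        mul_le_mul_of_nonneg_left h1 (by positivity)
    _ = (A + B * |x|) / Γn * Real.exp (-(β * Real.exp (-x))) := by ring
    _ ≤ (A + B * |x|) / Γn * Real.exp (-(β * Real.exp (-x)) * theta (Real.log β - x)) :=
        mul_le_mul_of_nonneg_left hθ (by positivity)
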